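/- Let k be a perfect field of characteristic p and A a k-algebra. Then the perfect closure A^pf is isomorphic, as a k-algebra, to the colimit colim_{n ≥ 0} A^(p^{-n}) of the Frobenius twists, where the transition map A^(p^{-n-1}) → A^(p^{-n}) is given on generators by a ⊗ c ↦ a^p ⊗ c. -/

import Mathlib

open scoped TensorProduct

universe u v

variable (k : Type u) [Field k] (p : ℕ) [Fact p.Prime] [CharP k p] [PerfectRing k p]

/-- `F_k^m` for `m : ℤ`: integer powers of the Frobenius automorphism of the perfect
field `k`, as a ring homomorphism. -/
noncomputable def frobPow (m : ℤ) : k →+* k :=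
  (((frobeniusEquiv k p : RingAut k) ^ m : RingAut k) : k ≃+* k).toRingHom

/-- `(k, F_k^n)`: the field `k` regarded as a `k`-algebra via `F_k^n` (`n : ℤ`). -/
def FrobBase (_p : ℕ) (_n : ℤ) : Type u := k

instance (n : ℤ) : CommRing (FrobBase k p n) := inferInstanceAs (CommRing k)

noncomputable instance (n : ℤ) : Algebra k (FrobBase k p n) := (frobPow k p n).toAlgebra

/-- The Frobenius twist `A^(p^n) = A ⊗_k (k, F_k^n)` of a `k`-algebra `A`. -/
def Twist (A : Type v) [CommRing A] [Algebra k A] (n : ℤ) : Type (max v u) :=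
  A ⊗[k] FrobBase k p n

noncomputable instance (A : Type v) [CommRing A] [Algebra k A] (n : ℤ) : CommRing (Twist k p A n) :=
  inferInstanceAs (CommRing (A ⊗[k] FrobBase k p n))

/-- The identity of `k`, viewed as a ring homomorphism `k →+* (k, F_k^n)`. -/
def toFrobBase (n : ℤ) : k →+* FrobBase k p n := RingHom.id k

/-- The `k`-algebra structure on the twist `A^(p^n)` acting through the *right* tensor
factor by plain multiplication: `c • (a ⊗ d) = a ⊗ (c * d)`. -/
noncomputable instance (A : Type v) [CommRing A] [Algebra k A] (n : ℤ) :
    Algebra k (Twist k p A n) :=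
  ((Algebra.TensorProduct.includeRight.toRingHom :
      FrobBase k p n →+* A ⊗[k] FrobBase k p n).comp (toFrobBase k p n)).toAlgebra

/-- The pure tensor `a ⊗ c` as an element of the twist `A^(p^n)`. -/
noncomputable def twistMk (A : Type v) [CommRing A] [Algebra k A] (n : ℤ) (a : A) (c : k) :
    Twist k p A n :=
  a ⊗ₜ[k] (show FrobBase k p n from c)

/-- The `k`-algebra structure on the perfect closure `A^pf` of a `k`-algebra `A`, via
`k → A → A^pf`. -/
noncomputable instance perfectClosureBaseAlgebra
    (A : Type v) [CommRing A] [Algebra k A] [CharP A p] :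
    Algebra k (PerfectClosure A p) :=
  ((PerfectClosure.of A p).comp (algebraMap k A)).toAlgebra


namespace PfAux

section FrobPowLemmas

variable (k : Type u) [Field k] (p : ℕ) [Fact p.Prime] [CharP k p] [PerfectRing k p]

lemma frobPow_apply (m : ℤ) (c : k) :
    frobPow k p m c = (((frobeniusEquiv k p : RingAut k) ^ m : RingAut k) : k ≃+* k) c := rfl

lemma frobPow_add (m n : ℤ) (c : k) :
    frobPow k p m (frobPow k p n c) = frobPow k p (m + n) c := by
  rw [frobPow_apply, frobPow_apply, frobPow_apply, zpow_add]
  rfl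

lemma frobPow_zero (c : k) : frobPow k p 0 c = c := by
  rw [frobPow_apply, zpow_zero]; rfl

lemma frobPow_natCast (n : ℕ) (c : k) : frobPow k p (n : ℤ) c = c ^ p ^ n := by
  induction n with
  | zero => simpa using frobPow_zero k p c
  | succ n ih =>
      have : ((n + 1 : ℕ) : ℤ) = 1 + (n : ℤ) := by push_cast; ring
      rw [this, ← frobPow_add, ih]
      have h1 : ∀ d : k, frobPow k p 1 d = d ^ p := fun d => by
        simp [frobPow_apply, zpow_one, frobeniusEquiv_apply, frobenius_def]
      rw [h1, ← pow_mul, pow_succ]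

lemma frobPow_cancel (n : ℕ) (c : k) :
    frobPow k p (n : ℤ) (frobPow k p (-(n : ℤ)) c) = c := by
  rw [frobPow_add, add_neg_cancel, frobPow_zero]

end FrobPowLemmas

section Main

variable (k : Type u) [Field k] (p : ℕ) [Fact p.Prime] [CharP k p] [PerfectRing k p]
variable (A : Type v) [CommRing A] [Algebra k A]

/-- `algebraMap` of `FrobBase k p m` is `frobPow k p m`. -/
lemma algebraMap_frobBase (m : ℤ) (c : k) :
    algebraMap k (FrobBase k p m) c = (show FrobBase k p m from frobPow k p m c) := rfl

/-- `algebraMap` of `Twist k p A m` is `1 ⊗ c`. -/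
lemma algebraMap_twist (m : ℤ) (c : k) :
    algebraMap k (Twist k p A m) c = twistMk k p A m 1 c := by
  show Algebra.TensorProduct.includeRight.toRingHom (toFrobBase k p m c) = _
  rfl

/-- The `k`-algebra map `FrobBase k p (-n) → A`, `c ↦ algebraMap (F^n c)`. -/
noncomputable def frobBaseToA (n : ℕ) : FrobBase k p (-(n : ℤ)) →ₐ[k] A where
  toRingHom := ((algebraMap k A).comp (frobPow k p (n : ℤ)) :)
  commutes' := fun c => by
    show algebraMap k A (frobPow k p (n : ℤ) (frobPow k p (-(n : ℤ)) c)) = algebraMap k A c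
    rw [frobPow_cancel]

/-- The ring map `Twist k p A (-n) → A`, `a ⊗ c ↦ a * algebraMap (F^n c)`. -/
noncomputable def twistToA (n : ℕ) : Twist k p A (-(n : ℤ)) →+* A :=
  (Algebra.TensorProduct.productMap (AlgHom.id k A) (frobBaseToA k p A n)).toRingHom

lemma twistToA_tmul (n : ℕ) (a : A) (c : k) :
    twistToA k p A n (twistMk k p A (-(n : ℤ)) a c)
      = a * algebraMap k A (frobPow k p (n : ℤ) c) := rfl

/-- The ring map `A → Twist k p A m`, `a ↦ a ⊗ 1`. -/
noncomputable def aToTwist (m : ℤ) : A →+* Twist k p A m :=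
  (Algebra.TensorProduct.includeLeftRingHom : A →+* A ⊗[k] FrobBase k p m)

lemma aToTwist_apply (m : ℤ) (a : A) : aToTwist k p A m a = twistMk k p A m a 1 := rfl

/-- Pure tensors rewritten with the scalar moved to the left factor. -/
lemma twistMk_eq (n : ℕ) (a : A) (c : k) :
    twistMk k p A (-(n : ℤ)) a c
      = twistMk k p A (-(n : ℤ)) (a * algebraMap k A (frobPow k p (n : ℤ) c)) 1 := by
  set r : k := frobPow k p (n : ℤ) c with hr
  have h1 : (show FrobBase k p (-(n : ℤ)) from c) = r • (1 : FrobBase k p (-(n : ℤ))) := by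
    rw [Algebra.smul_def, algebraMap_frobBase, mul_one]
    show (show FrobBase k p (-(n : ℤ)) from c)
        = (show FrobBase k p (-(n : ℤ)) from frobPow k p (-(n : ℤ)) r)
    rw [hr, frobPow_add, neg_add_cancel, frobPow_zero]
  show a ⊗ₜ[k] (show FrobBase k p (-(n : ℤ)) from c) = _
  rw [h1, ← TensorProduct.smul_tmul, Algebra.smul_def, mul_comm]
  rfl

lemma twistToA_aToTwist (n : ℕ) (a : A) :
    twistToA k p A n (aToTwist k p A (-(n : ℤ)) a) = a := by
  rw [aToTwist_apply, twistToA_tmul, map_one, map_one, mul_one]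

lemma aToTwist_twistToA (n : ℕ) (x : Twist k p A (-(n : ℤ))) :
    twistMk k p A (-(n : ℤ)) (twistToA k p A n x) 1 = x := by
  induction x using TensorProduct.induction_on with
  | zero => show (0 : A) ⊗ₜ[k] _ = _; exact TensorProduct.zero_tmul _ _
  | tmul a c =>
      exact (twistMk_eq k p A n a c).symm
  | add x y hx hy =>
      rw [show twistToA k p A n (x + y) = twistToA k p A n x + twistToA k p A n y from
        map_add _ _ _]
      have h : twistMk k p A (-(n : ℤ)) (twistToA k p A n x + twistToA k p A n y) 1
          = twistMk k p A (-(n : ℤ)) (twistToA k p A n x) 1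
            + twistMk k p A (-(n : ℤ)) (twistToA k p A n y) 1 :=
        TensorProduct.add_tmul _ _ _
      rw [h, hx, hy]
      rfl

/-- `mk (n, ·)` as a ring hom `A →+* PerfectClosure A p`. -/
noncomputable def pcmk [CharP A p] (n : ℕ) : A →+* PerfectClosure A p where
  toFun a := PerfectClosure.mk A p (n, a)
  map_one' := by
    rw [PerfectClosure.one_def]
    exact (PerfectClosure.R.sound A p n 0 1 1 (by rw [iterate_map_one])).symm
  map_mul' a b := by
    rw [PerfectClosure.mk_mul_mk]
    exact PerfectClosure.R.sound A p n n (a * b) _ (by simp [iterate_map_mul])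
  map_zero' := by
    rw [PerfectClosure.zero_def]
    exact (PerfectClosure.R.sound A p n 0 0 0 (by rw [iterate_map_zero])).symm
  map_add' a b := by
    rw [PerfectClosure.mk_add_mk]
    exact PerfectClosure.R.sound A p n n (a + b) _ (by simp [iterate_map_add])

lemma pcmk_apply [CharP A p] (n : ℕ) (a : A) :
    pcmk p A n a = PerfectClosure.mk A p (n, a) := rfl

lemma pcmk_succ_pow [CharP A p] (n : ℕ) (a : A) :
    pcmk p A (n + 1) (a ^ p) = pcmk p A n a := by
  rw [pcmk_apply, pcmk_apply]
  exact PerfectClosure.mk_succ_pow A p n a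

lemma pcmk_pow_pow [CharP A p] (m n : ℕ) (a : A) :
    pcmk p A (m + n) (a ^ p ^ m) = pcmk p A n a := by
  rw [pcmk_apply, pcmk_apply, ← iterate_frobenius (R := A)]
  exact (PerfectClosure.R.sound A p m n a _ rfl).symm

end Main

end PfAux


namespace PfAux

section Main2

variable (k : Type u) [Field k] (p : ℕ) [Fact p.Prime] [CharP k p] [PerfectRing k p]
variable (A : Type v) [CommRing A] [Algebra k A] [CharP A p]

lemma frobPow_succ (n : ℕ) (c : k) :
    (frobPow k p (n : ℤ) c) ^ p = frobPow k p ((n + 1 : ℕ) : ℤ) c := by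
  rw [frobPow_natCast, frobPow_natCast, ← pow_mul, pow_succ]

/-- Transition ring hom `Twist(-n) → Twist(-(n+1))`. -/
noncomputable def tRing (n : ℕ) :
    Twist k p A (-(n : ℤ)) →+* Twist k p A (-((n + 1 : ℕ) : ℤ)) :=
  (aToTwist k p A (-((n + 1 : ℕ) : ℤ))).comp ((frobenius A p).comp (twistToA k p A n))

lemma tRing_tmul (n : ℕ) (a : A) (c : k) :
    tRing k p A n (twistMk k p A (-(n : ℤ)) a c)
      = twistMk k p A (-((n + 1 : ℕ) : ℤ)) (a ^ p) c := by
  show aToTwist k p A _ (frobenius A p (twistToA k p A n (twistMk k p A (-(n : ℤ)) a c))) = _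
  rw [twistToA_tmul, frobenius_def, mul_pow, ← map_pow, frobPow_succ, aToTwist_apply,
    ← twistMk_eq]

/-- Transition `k`-algebra hom. -/
noncomputable def tAlg (n : ℕ) :
    Twist k p A (-(n : ℤ)) →ₐ[k] Twist k p A (-((n + 1 : ℕ) : ℤ)) where
  toRingHom := tRing k p A n
  commutes' c := by
    show tRing k p A n (algebraMap k (Twist k p A (-(n : ℤ))) c)
        = algebraMap k (Twist k p A (-((n + 1 : ℕ) : ℤ))) c
    rw [algebraMap_twist, algebraMap_twist, tRing_tmul, one_pow]

lemma tAlg_tmul (n : ℕ) (a : A) (c : k) :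
    tAlg k p A n (twistMk k p A (-(n : ℤ)) a c)
      = twistMk k p A (-((n + 1 : ℕ) : ℤ)) (a ^ p) c :=
  tRing_tmul k p A n a c

/-- Cocone ring hom `Twist(-n) → PerfectClosure A p`. -/
noncomputable def iRing (n : ℕ) : Twist k p A (-(n : ℤ)) →+* PerfectClosure A p :=
  (pcmk p A n).comp (twistToA k p A n)

lemma iRing_tmul (n : ℕ) (a : A) (c : k) :
    iRing k p A n (twistMk k p A (-(n : ℤ)) a c)
      = pcmk p A n (a * algebraMap k A (frobPow k p (n : ℤ) c)) := rfl

/-- Cocone `k`-algebra hom. -/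
noncomputable def iAlg (n : ℕ) : Twist k p A (-(n : ℤ)) →ₐ[k] PerfectClosure A p where
  toRingHom := iRing k p A n
  commutes' c := by
    show pcmk p A n (twistToA k p A n (algebraMap k (Twist k p A (-(n : ℤ))) c))
        = PerfectClosure.of A p (algebraMap k A c)
    rw [algebraMap_twist, twistToA_tmul, one_mul, frobPow_natCast, map_pow]
    have h0 : pcmk p A (n + 0) ((algebraMap k A c) ^ p ^ n) = pcmk p A 0 (algebraMap k A c) :=
      pcmk_pow_pow p A n 0 (algebraMap k A c)
    rw [show n + 0 = n from rfl] at h0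
    rw [h0, pcmk_apply]
    exact (PerfectClosure.of_apply A p _).symm

lemma iAlg_comp_tAlg (n : ℕ) : (iAlg k p A (n + 1)).comp (tAlg k p A n) = iAlg k p A n := by
  apply AlgHom.ext
  intro x
  show pcmk p A (n + 1) (twistToA k p A (n + 1)
      (aToTwist k p A (-((n + 1 : ℕ) : ℤ)) (frobenius A p (twistToA k p A n x))))
    = pcmk p A n (twistToA k p A n x)
  rw [twistToA_aToTwist, frobenius_def, pcmk_succ_pow]

lemma iAlg_mk (n : ℕ) (a : A) :
    iAlg k p A n (twistMk k p A (-(n : ℤ)) a 1) = PerfectClosure.mk A p (n, a) := by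
  show pcmk p A n (twistToA k p A n (twistMk k p A (-(n : ℤ)) a 1)) = _
  rw [twistToA_tmul, map_one, map_one, mul_one, pcmk_apply]

section Universal

variable {S : Type w} [CommRing S] [Algebra k S]
variable (σ : ∀ n : ℕ, Twist k p A (-(n : ℤ)) →ₐ[k] S)

/-- Component maps `A → S` of a cocone. -/
noncomputable def tau (n : ℕ) : A →+* S :=
  (σ n).toRingHom.comp (aToTwist k p A (-(n : ℤ)))

variable (hσ : ∀ n : ℕ, (σ (n + 1)).comp (tAlg k p A n) = σ n)

include hσ in
lemma tau_succ_pow (n : ℕ) (x : A) : tau k p A σ (n + 1) (x ^ p) = tau k p A σ n x := by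
  show σ (n + 1) (aToTwist k p A (-((n + 1 : ℕ) : ℤ)) (x ^ p)) = σ n (aToTwist k p A _ x)
  rw [aToTwist_apply, aToTwist_apply, ← tAlg_tmul]
  exact AlgHom.congr_fun (hσ n) _

include hσ in
lemma tau_pow_pow (m n : ℕ) (x : A) : tau k p A σ (m + n) (x ^ p ^ n) = tau k p A σ m x := by
  induction n with
  | zero => rw [pow_zero, pow_one]; rfl
  | succ n ih =>
      rw [pow_succ, pow_mul, show m + (n + 1) = (m + n) + 1 from rfl,
        tau_succ_pow k p A σ hσ, ih]

/-- The induced map `PerfectClosure A p → S`. -/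
noncomputable def uFun (x : PerfectClosure A p) : S :=
  PerfectClosure.liftOn x (fun q => tau k p A σ q.1 q.2) (by
    rintro _ _ ⟨n, x⟩
    exact (tau_succ_pow k p A σ hσ n x).symm)

lemma uFun_mk (n : ℕ) (a : A) :
    uFun k p A σ hσ (PerfectClosure.mk A p (n, a)) = tau k p A σ n a := rfl

/-- The induced `k`-algebra hom `PerfectClosure A p → S`. -/
noncomputable def uAlg : PerfectClosure A p →ₐ[k] S where
  toFun := uFun k p A σ hσ
  map_one' := by
    rw [PerfectClosure.one_def]
    show tau k p A σ 0 (1 : A) = 1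
    rw [map_one]
  map_mul' x y := by
    refine PerfectClosure.induction_on x fun ⟨m, a⟩ => PerfectClosure.induction_on y
      fun ⟨n, b⟩ => ?_
    rw [PerfectClosure.mk_mul_mk]
    show tau k p A σ (m + n) ((frobenius A p)^[n] a * (frobenius A p)^[m] b)
        = tau k p A σ m a * tau k p A σ n b
    rw [map_mul, iterate_frobenius, iterate_frobenius, tau_pow_pow k p A σ hσ,
      add_comm m n, tau_pow_pow k p A σ hσ]
  map_zero' := by
    rw [PerfectClosure.zero_def]
    show tau k p A σ 0 (0 : A) = 0
    rw [map_zero]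
  map_add' x y := by
    refine PerfectClosure.induction_on x fun ⟨m, a⟩ => PerfectClosure.induction_on y
      fun ⟨n, b⟩ => ?_
    rw [PerfectClosure.mk_add_mk]
    show tau k p A σ (m + n) ((frobenius A p)^[n] a + (frobenius A p)^[m] b)
        = tau k p A σ m a + tau k p A σ n b
    rw [map_add, iterate_frobenius, iterate_frobenius, tau_pow_pow k p A σ hσ,
      add_comm m n, tau_pow_pow k p A σ hσ]
  commutes' c := by
    show uFun k p A σ hσ (PerfectClosure.of A p (algebraMap k A c)) = algebraMap k S c
    rw [PerfectClosure.of_apply, uFun_mk]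
    show σ 0 (aToTwist k p A (-((0 : ℕ) : ℤ)) (algebraMap k A c)) = algebraMap k S c
    rw [aToTwist_apply]
    have h : twistMk k p A (-((0 : ℕ) : ℤ)) (algebraMap k A c) 1
        = twistMk k p A (-((0 : ℕ) : ℤ)) 1 c := by
      rw [twistMk_eq k p A 0 1 c, frobPow_natCast, pow_zero, pow_one, one_mul]
    rw [h, ← algebraMap_twist]
    exact (σ 0).commutes c

lemma uAlg_comp_iAlg (n : ℕ) : (uAlg k p A σ hσ).comp (iAlg k p A n) = σ n := by
  apply AlgHom.ext
  intro x
  show uFun k p A σ hσ (pcmk p A n (twistToA k p A n x)) = σ n x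
  rw [pcmk_apply, uFun_mk]
  show σ n (aToTwist k p A (-(n : ℤ)) (twistToA k p A n x)) = σ n x
  rw [aToTwist_apply, aToTwist_twistToA]

lemma uAlg_unique (v : PerfectClosure A p →ₐ[k] S)
    (hv : ∀ n : ℕ, v.comp (iAlg k p A n) = σ n) : v = uAlg k p A σ hσ := by
  apply AlgHom.ext
  intro x
  refine PerfectClosure.induction_on x fun ⟨n, a⟩ => ?_
  rw [← iAlg_mk k p A n a]
  exact (AlgHom.congr_fun (hv n) _).trans
    (AlgHom.congr_fun (uAlg_comp_iAlg k p A σ hσ n) _).symm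

end Universal

end Main2

end PfAux

/-- Let `k` be a perfect field of characteristic `p` and `A` a `k`-algebra.
Then the perfect closure `A^pf` is, as a `k`-algebra, the colimit `colim_{n ≥ 0} A^(p^{-n})`
of the negative Frobenius twists along the transition maps `a ⊗ c ↦ a^p ⊗ c`: there are
transition maps `t n : A^(p^{-n}) → A^(p^{-n-1})` given on generators by `a ⊗ c ↦ a^p ⊗ c`
and a compatible cocone `ι` into `A^pf` with `ι 0 (a ⊗ 1) = φ_A a`, which is a colimit
cocone (it satisfies the universal property of the colimit in the category of
`k`-algebras). -/
theorem perfectClosure_is_colimit_of_twists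
    (A : Type max u v) [CommRing A] [Algebra k A] [CharP A p] :
    ∃ (t : ∀ n : ℕ, Twist k p A (-(n : ℤ)) →ₐ[k] Twist k p A (-((n + 1 : ℕ) : ℤ)))
      (ι : ∀ n : ℕ, Twist k p A (-(n : ℤ)) →ₐ[k] PerfectClosure A p),
      (∀ (n : ℕ) (a : A) (c : k),
          t n (twistMk k p A (-(n : ℤ)) a c) = twistMk k p A (-((n + 1 : ℕ) : ℤ)) (a ^ p) c) ∧
      (∀ n : ℕ, (ι (n + 1)).comp (t n) = ι n) ∧
      (∀ a : A, ι 0 (twistMk k p A 0 a 1) = PerfectClosure.of A p a) ∧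
      (∀ (S : Type max u v) [CommRing S] [Algebra k S],
        ∀ σ : ∀ n : ℕ, Twist k p A (-(n : ℤ)) →ₐ[k] S,
          (∀ n : ℕ, (σ (n + 1)).comp (t n) = σ n) →
          ∃! u : PerfectClosure A p →ₐ[k] S, ∀ n : ℕ, u.comp (ι n) = σ n) := by
  
  refine ⟨PfAux.tAlg k p A, PfAux.iAlg k p A, PfAux.tAlg_tmul k p A, PfAux.iAlg_comp_tAlg k p A,
    fun a => ?_, fun S _ _ σ hσ => ⟨PfAux.uAlg k p A σ hσ, PfAux.uAlg_comp_iAlg k p A σ hσ,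
      fun v hv => PfAux.uAlg_unique k p A σ hσ v hv⟩⟩
  rw [show twistMk k p A 0 a 1 = twistMk k p A (-((0 : ℕ) : ℤ)) a 1 from rfl,
    PfAux.iAlg_mk k p A 0 a]
  exact (PerfectClosure.of_apply A p a).symm
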